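/- arXiv:1908.08678 — 2 statements merged into one kernel-verified Lean document; each statement's English description precedes it below -/
import Mathlib

section
/- Let g be an automorphism of the left R-module R, where R = F_p^{(d)}[Π]/(Π^d) with Π α = α^Q Π, viewed as a d-dimensional F_p^{(d)}-vector space with basis {1, Π, ..., Π^{d−1}}, and suppose g commutes with left multiplication by all elements of R. If g(1) = α_1 + α_2 Π + ··· + α_d Π^{d−1}, then the matrix of g in this basis is lower triangular with diagonal entries α_1, α_1^Q, α_1^{Q²}, ..., α_1^{Q^{d−1}}, and hence det(g) = α_1^{1+Q+···+Q^{d−1}} = Nr_{F_p^{(d)}/F_p}(α_1). -/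
/-- Let `g` be an automorphism of the left `R`-module `R`, where `R = F_p^{(d)}[Π]/(Π^d)`
with `Π α = α^Q Π`, viewed as a `d`-dimensional `F_p^{(d)}`-vector space with basis
`{1, Π, ..., Π^{d−1}}`, commuting with left multiplication by all elements of `R`.
If `g(1) = α_1 + α_2 Π + ··· + α_d Π^{d−1}`, then the matrix `M` of `g` in this basis is
lower triangular with diagonal entries `α_1, α_1^Q, α_1^{Q²}, ..., α_1^{Q^{d−1}}`, and hence
`det(g) = α_1^{1+Q+···+Q^{d−1}} = Nr_{F_p^{(d)}/F_p}(α_1)`. -/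
theorem stmt_6 (Fp L : Type) [Field Fp] [Fintype Fp] [Field L] [Fintype L] [Algebra Fp L]
    (Q d : ℕ) (hQ : Fintype.card Fp = Q) (hd : 0 < d) (hdeg : Module.finrank Fp L = d)
    (R : Type) [Ring R] (ι : L →+* R) (Pi : R)
    (hnil : Pi ^ d = 0) (htwist : ∀ α : L, Pi * ι α = ι (α ^ Q) * Pi)
    (hbasis : Function.Bijective (fun f : Fin d → L => ∑ i : Fin d, ι (f i) * Pi ^ (i : ℕ)))
    (g : R → R) (hgbij : Function.Bijective g)
    (hgcomm : ∀ r x : R, g (r * x) = r * g x)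
    (a : Fin d → L) (hg1 : g 1 = ∑ i : Fin d, ι (a i) * Pi ^ (i : ℕ)) :
    ∃ M : Matrix (Fin d) (Fin d) L,
      (∀ j : Fin d, g (Pi ^ (j : ℕ)) = ∑ i : Fin d, ι (M i j) * Pi ^ (i : ℕ)) ∧
      (∀ i j : Fin d, i < j → M i j = 0) ∧
      (∀ i : Fin d, M i i = (a ⟨0, hd⟩) ^ (Q ^ (i : ℕ))) ∧
      M.det = (a ⟨0, hd⟩) ^ (∑ i ∈ Finset.range d, Q ^ i) := by
  classical
  have twist_pow : ∀ (j : ℕ) (α : L), Pi ^ j * ι α = ι (α ^ Q ^ j) * Pi ^ j := by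
    intro j
    induction j with
    | zero => intro α; simp
    | succ n ih =>
      intro α
      have hexp : (α ^ Q) ^ Q ^ n = α ^ Q ^ (n + 1) := by
        rw [← pow_mul, pow_succ, mul_comm]
      calc Pi ^ (n+1) * ι α = Pi ^ n * (Pi * ι α) := by rw [pow_succ, mul_assoc]
        _ = Pi ^ n * ι (α ^ Q) * Pi := by rw [htwist, ← mul_assoc]
        _ = ι ((α ^ Q) ^ Q ^ n) * Pi ^ n * Pi := by rw [ih]
        _ = ι (α ^ Q ^ (n+1)) * Pi ^ (n+1) := by rw [hexp, mul_assoc, ← pow_succ]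
  have pownil : ∀ n : ℕ, d ≤ n → Pi ^ n = 0 := by
    intro n hn
    have : Pi ^ n = Pi ^ d * Pi ^ (n - d) := by rw [← pow_add]; congr 1; omega
    rw [this, hnil, zero_mul]
  refine ⟨fun i j => if h : (j : ℕ) ≤ (i : ℕ) then
      a ⟨(i : ℕ) - (j : ℕ), lt_of_le_of_lt (Nat.sub_le _ _) i.isLt⟩ ^ Q ^ (j : ℕ) else 0,
      ?_, ?_, ?_, ?_⟩
  · intro j
    have h1 : g (Pi ^ (j : ℕ)) = Pi ^ (j : ℕ) * g 1 := by
      simpa using hgcomm (Pi ^ (j : ℕ)) 1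
    rw [h1, hg1, Finset.mul_sum]
    have h2 : ∀ i : Fin d, Pi ^ (j : ℕ) * (ι (a i) * Pi ^ (i : ℕ))
        = ι (a i ^ Q ^ (j : ℕ)) * Pi ^ ((j : ℕ) + (i : ℕ)) := by
      intro i
      rw [← mul_assoc, twist_pow, mul_assoc, ← pow_add]
    simp_rw [h2]
    rw [← Finset.sum_filter_add_sum_filter_not Finset.univ
        (fun i : Fin d => (j : ℕ) + (i : ℕ) < d)
        (fun i : Fin d => ι (a i ^ Q ^ (j : ℕ)) * Pi ^ ((j : ℕ) + (i : ℕ)))]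
    have hz : ∑ i ∈ Finset.univ.filter (fun i : Fin d => ¬ ((j : ℕ) + (i : ℕ) < d)),
        ι (a i ^ Q ^ (j : ℕ)) * Pi ^ ((j : ℕ) + (i : ℕ)) = 0 := by
      apply Finset.sum_eq_zero
      intro i hi
      simp only [Finset.mem_filter] at hi
      rw [pownil _ (by omega), mul_zero]
    rw [hz, add_zero]
    rw [show (∑ i : Fin d, ι (if h : (j : ℕ) ≤ (i : ℕ) then
        a ⟨(i : ℕ) - (j : ℕ), lt_of_le_of_lt (Nat.sub_le _ _) i.isLt⟩ ^ Q ^ (j : ℕ) else 0)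
        * Pi ^ (i : ℕ)) =
        ∑ i ∈ Finset.univ.filter (fun i : Fin d => (j : ℕ) ≤ (i : ℕ)),
        ι (if h : (j : ℕ) ≤ (i : ℕ) then
        a ⟨(i : ℕ) - (j : ℕ), lt_of_le_of_lt (Nat.sub_le _ _) i.isLt⟩ ^ Q ^ (j : ℕ) else 0)
        * Pi ^ (i : ℕ) from by
      rw [eq_comm]
      apply Finset.sum_subset (Finset.filter_subset _ _)
      intro i _ hi
      simp only [Finset.mem_filter, Finset.mem_univ, true_and] at hi
      rw [dif_neg hi, map_zero, zero_mul]]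
    refine Finset.sum_bij'
      (fun (i : Fin d) (hi : i ∈ Finset.univ.filter (fun i : Fin d => (j : ℕ) + (i : ℕ) < d)) =>
        (⟨(j : ℕ) + (i : ℕ), by simp only [Finset.mem_filter] at hi; omega⟩ : Fin d))
      (fun (k : Fin d) (hk : k ∈ Finset.univ.filter (fun k : Fin d => (j : ℕ) ≤ (k : ℕ))) =>
        (⟨(k : ℕ) - (j : ℕ), lt_of_le_of_lt (Nat.sub_le _ _) k.isLt⟩ : Fin d))
      ?_ ?_ ?_ ?_ ?_
    · intro i hi
      simp only [Finset.mem_filter, Finset.mem_univ, true_and] at hi ⊢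
      omega
    · intro k hk
      simp only [Finset.mem_filter, Finset.mem_univ, true_and] at hk ⊢
      omega
    · intro i hi
      simp only [Finset.mem_filter, Finset.mem_univ, true_and] at hi
      ext
      simp
    · intro k hk
      simp only [Finset.mem_filter, Finset.mem_univ, true_and] at hk
      ext
      simp
      omega
    · intro i hi
      simp only [Finset.mem_filter, Finset.mem_univ, true_and] at hi
      rw [dif_pos (by simp)]
      simp
  · intro i j hij
    exact dif_neg (by omega)
  · intro i
    simp
  · refine (Matrix.det_of_lowerTriangular _ ?tri).trans ?_
    case tri =>
      intro i j hij
      exact dif_neg (by simp at hij; omega)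
    have key : ∀ i : Fin d, (if h : (i : ℕ) ≤ (i : ℕ) then
        a ⟨(i : ℕ) - (i : ℕ), lt_of_le_of_lt (Nat.sub_le _ _) i.isLt⟩ ^ Q ^ (i : ℕ) else 0)
        = (a ⟨0, hd⟩) ^ Q ^ (i : ℕ) := by
      intro i
      simp
    simp_rw [key]
    rw [Finset.prod_pow_eq_pow_sum, ← Fin.sum_univ_eq_sum_range]
end

section
/- Let q be a prime power, 𝔶 ∈ F_q[T] monic irreducible, and let π, π' be the two roots (in an algebraic closure of F = F_q(T)) of a quadratic X² − aX + b with a, b ∈ F_q[T], b = μ𝔶 for some μ ∈ F_q^×, and deg(a) ≤ deg(𝔶)/2. Then for every r ≥ 1, 𝔶 divides π^r + (π')^r in F_q[T] if and only if a = 0. -/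
/-- Newton power-sum sequence for a quadratic with trace `a` and norm `b`. -/
def newtonSeq {R : Type*} [CommRing R] (a b : R) : ℕ → R
  | 0 => 2
  | 1 => a
  | (n+2) => a * newtonSeq a b (n+1) - b * newtonSeq a b n

lemma newtonSeq_spec {R L : Type*} [CommRing R] [CommRing L] (ι : R →+* L)
    (a b : R) (π π' : L) (hsum : π + π' = ι a) (hprod : π * π' = ι b) :
    ∀ n, ι (newtonSeq a b n) = π ^ n + π' ^ n := by
  have key : ∀ n, ι (newtonSeq a b n) = π ^ n + π' ^ n ∧
      ι (newtonSeq a b (n+1)) = π ^ (n+1) + π' ^ (n+1) := by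
    intro n
    induction n with
    | zero =>
      refine ⟨?_, by simp [newtonSeq, hsum]⟩
      show ι 2 = _
      rw [show (2:R) = 1+1 by norm_num, map_add, map_one]
      simp
    | succ k ih =>
      refine ⟨ih.2, ?_⟩
      show ι (newtonSeq a b (k+2)) = _
      rw [newtonSeq, map_sub, map_mul, map_mul, ← hsum, ← hprod, ih.1, ih.2]
      ring
  exact fun n => (key n).1

lemma newtonSeq_dvd {R : Type*} [CommRing R] (a b c : R) (hbc : c ∣ b) :
    ∀ n, 1 ≤ n → c ∣ newtonSeq a b n - a ^ n := by
  have key : ∀ n, c ∣ newtonSeq a b (n+1) - a ^ (n+1) := by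
    intro n
    induction n using Nat.strong_induction_on with
    | _ n ih =>
      match n with
      | 0 => simp [newtonSeq]
      | k+1 =>
        show c ∣ newtonSeq a b (k+2) - a ^ (k+2)
        rw [newtonSeq]
        have h1 := ih k (by omega)
        have : a * newtonSeq a b (k+1) - b * newtonSeq a b k - a ^ (k+2) =
            a * (newtonSeq a b (k+1) - a ^ (k+1)) - b * newtonSeq a b k := by ring
        rw [this]
        exact dvd_sub (Dvd.dvd.mul_left h1 a) (Dvd.dvd.mul_right hbc _)
  intro n hn
  obtain ⟨m, rfl⟩ : ∃ m, n = m + 1 := ⟨n - 1, by omega⟩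
  exact key m

/-- Let `q` be a prime power, `𝔶 ∈ F_q[T]` monic irreducible, and let `π, π'` be the two
roots (in a field `L` containing `F_q[T]` via an embedding `ι`) of the quadratic
`X² − aX + b` with `a, b ∈ F_q[T]`, `b = μ𝔶` for some `μ ∈ F_q^×`, and
`deg(a) ≤ deg(𝔶)/2`.  Then for every `r ≥ 1`, `𝔶` divides `π^r + (π')^r` in `F_q[T]`
(i.e. divides the element `s ∈ F_q[T]` with `ι s = π^r + (π')^r`) if and only if `a = 0`. -/
theorem stmt_19 (q : ℕ) (hq : ∃ p n : ℕ, p.Prime ∧ 0 < n ∧ q = p ^ n)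
    (Fq : Type) [Field Fq] [Fintype Fq] (hcard : Fintype.card Fq = q)
    (𝔶 : Polynomial Fq) (h𝔶 : Irreducible 𝔶) (hm : 𝔶.Monic)
    (a : Polynomial Fq) (μ : Fq) (hμ : μ ≠ 0)
    (hdeg : 2 * a.natDegree ≤ 𝔶.natDegree)
    (L : Type) [Field L] (ι : Polynomial Fq →+* L) (hinj : Function.Injective ι)
    (π π' : L) (hsum : π + π' = ι a) (hprod : π * π' = ι (Polynomial.C μ * 𝔶)) :
    ∀ r : ℕ, 1 ≤ r → ∀ s : Polynomial Fq, ι s = π ^ r + π' ^ r → (𝔶 ∣ s ↔ a = 0) := by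
  intro r hr s hs
  set b : Polynomial Fq := Polynomial.C μ * 𝔶 with hb
  have hseq := newtonSeq_spec ι a b π π' hsum hprod r
  have hseq' : s = newtonSeq a b r := hinj (by rw [hs, hseq])
  have hdvdb : 𝔶 ∣ b := Dvd.intro_left _ rfl
  have hmod : 𝔶 ∣ s - a ^ r := hseq' ▸ newtonSeq_dvd a b 𝔶 hdvdb r hr
  have hiff : 𝔶 ∣ s ↔ 𝔶 ∣ a ^ r := by
    constructor
    · intro h
      have := dvd_sub h hmod
      simpa using this
    · intro h
      have := dvd_add hmod h
      simpa using this
  have hprime : Prime 𝔶 := h𝔶.prime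
  have hdegpos : 0 < 𝔶.natDegree := h𝔶.natDegree_pos
  rw [hiff]
  constructor
  · intro h
    have ha : 𝔶 ∣ a := hprime.dvd_of_dvd_pow h
    by_contra hne
    have := Polynomial.natDegree_le_of_dvd ha hne
    omega
  · intro h
    rw [h, zero_pow (by omega : r ≠ 0)]
    exact dvd_zero 𝔶
end
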